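/- Let μ₁, μ₂ be finite positive Borel measures and ν₁₂ a complex measure on a compact metric space X with |ν₁₂(E)|² ≤ μ₁(E)μ₂(E) for all Borel E. Let θ₁ ≠ 0, θ₂ be real numbers and set ν = θ₁²μ₁ + θ₂²μ₂ + 2θ₁θ₂ Re ν₁₂. If U is an open set with supp μ₁ ∩ supp μ₂ ∩ U = ∅ and ν restricted to U is zero, then μ₁ restricted to U is zero. -/

import Mathlib

open MeasureTheory

/-- The support of a positive measure: points all of whose open neighbourhoods have
positive measure. -/
def measureSupport {X : Type*} [TopologicalSpace X] [MeasurableSpace X]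
    (μ : Measure X) : Set X :=
  {x | ∀ U : Set X, IsOpen U → x ∈ U → 0 < μ U}

lemma isOpen_compl_measureSupport {X : Type*} [TopologicalSpace X] [MeasurableSpace X]
    (μ : Measure X) : IsOpen (measureSupport μ)ᶜ := by
  rw [isOpen_iff_forall_mem_open]
  intro x hx
  simp only [measureSupport, Set.mem_compl_iff, Set.mem_setOf_eq, not_forall] at hx
  obtain ⟨V, hVopen, hxV, hV⟩ := hx
  refine ⟨V, fun y hy => ?_, hVopen, hxV⟩
  simp only [measureSupport, Set.mem_compl_iff, Set.mem_setOf_eq, not_forall]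
  exact ⟨V, hVopen, hy, hV⟩

lemma measure_compl_measureSupport {X : Type*} [TopologicalSpace X]
    [SecondCountableTopology X] [MeasurableSpace X]
    (μ : Measure X) : μ (measureSupport μ)ᶜ = 0 := by
  apply measure_null_of_locally_null
  intro x hx
  simp only [measureSupport, Set.mem_compl_iff, Set.mem_setOf_eq, not_forall] at hx
  obtain ⟨V, hVopen, hxV, hV⟩ := hx
  refine ⟨V, ?_, by simpa using hV⟩
  exact mem_nhdsWithin_of_mem_nhds (hVopen.mem_nhds hxV)

/-- if `ν = θ₁²μ₁ + θ₂²μ₂ + 2θ₁θ₂ Re ν₁₂` vanishes on an open set `U`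
on which the supports of `μ₁` and `μ₂` are disjoint, then `μ₁` vanishes on `U`. -/
theorem diagonal_vanishes_of_combination_vanishing
    {X : Type*} [MetricSpace X] [CompactSpace X] [MeasurableSpace X] [BorelSpace X]
    (μ₁ μ₂ : Measure X) [IsFiniteMeasure μ₁] [IsFiniteMeasure μ₂]
    (ν₁₂ : ComplexMeasure X)
    (hdom : ∀ E : Set X, MeasurableSet E →
      ‖ν₁₂ E‖ ^ 2 ≤ (μ₁ E).toReal * (μ₂ E).toReal)
    (θ₁ θ₂ : ℝ) (hθ₁ : θ₁ ≠ 0)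
    (U : Set X) (hU : IsOpen U)
    (hsupp : measureSupport μ₁ ∩ measureSupport μ₂ ∩ U = ∅)
    (hν : ∀ E : Set X, MeasurableSet E → E ⊆ U →
      θ₁ ^ 2 * (μ₁ E).toReal + θ₂ ^ 2 * (μ₂ E).toReal
        + 2 * θ₁ * θ₂ * (ν₁₂ E).re = 0) :
    ∀ E : Set X, MeasurableSet E → E ⊆ U → μ₁ E = 0 := by
  intro E hE hEU
  have hS₂ : MeasurableSet (measureSupport μ₂) :=
    ((isOpen_compl_measureSupport μ₂).measurableSet).of_compl
  -- part inside supp μ₂ : disjoint from supp μ₁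
  have h1 : μ₁ (E ∩ measureSupport μ₂) = 0 := by
    refine measure_mono_null ?_ (measure_compl_measureSupport μ₁)
    intro x ⟨hxE, hx2⟩ hx1
    have : x ∈ measureSupport μ₁ ∩ measureSupport μ₂ ∩ U := ⟨⟨hx1, hx2⟩, hEU hxE⟩
    simp [hsupp] at this
  -- part outside supp μ₂
  set F := E \ measureSupport μ₂ with hF
  have hFm : MeasurableSet F := hE.diff hS₂
  have hFU : F ⊆ U := fun x hx => hEU hx.1
  have h2 : μ₂ F = 0 :=
    measure_mono_null (fun x hx => hx.2) (measure_compl_measureSupport μ₂)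
  have hre : (ν₁₂ F).re = 0 := by
    have := hdom F hFm
    rw [h2] at this
    simp only [ENNReal.toReal_zero, mul_zero] at this
    have habs : ‖ν₁₂ F‖ = 0 := by nlinarith [norm_nonneg (ν₁₂ F)]
    have : ν₁₂ F = 0 := norm_eq_zero.mp habs
    simp [this]
  have h3 : (μ₁ F).toReal = 0 := by
    have := hν F hFm hFU
    rw [hre, h2] at this
    simp only [ENNReal.toReal_zero, mul_zero, add_zero] at this
    have hθ : θ₁ ^ 2 > 0 := by positivity
    nlinarith
  have h4 : μ₁ F = 0 := by
    have := measure_ne_top μ₁ F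
    exact (ENNReal.toReal_eq_zero_iff _).mp h3 |>.resolve_right this
  have hsub : E ⊆ F ∪ (E ∩ measureSupport μ₂) := fun x hx => by
    by_cases h : x ∈ measureSupport μ₂
    · exact Or.inr ⟨hx, h⟩
    · exact Or.inl ⟨hx, h⟩
  have hle : μ₁ E ≤ μ₁ F + μ₁ (E ∩ measureSupport μ₂) :=
    (measure_mono hsub).trans (measure_union_le _ _)
  rw [h4, h1, add_zero] at hle
  exact le_antisymm hle zero_le
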